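/- A topological space (X, 𝒯) is α-subparacompact if and only if each α-open cover of X has a σ-closure-preserving closed refinement that covers X. -/

import Mathlib

open Set TopologicalSpace

universe u v

variable {X : Type u} {Y : Type v}

/-- A set is an α-set (α-open) w.r.t. the topology `T` if `A ⊆ Int (Cl (Int A))`. -/
def AlphaOpen (T : TopologicalSpace X) (A : Set X) : Prop :=
  letI := T
  A ⊆ interior (closure (interior A))

/-- The α-topology `𝒯^α`, whose open sets are exactly the α-sets of `T`. -/
def alphaTop (T : TopologicalSpace X) : TopologicalSpace X :=
  letI := T
  { IsOpen := fun A => A ⊆ interior (closure (interior A))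
    isOpen_univ := by simp
    isOpen_inter := by
      intro A B hA hB
      have hsub : interior (closure (interior A)) ∩ interior (closure (interior B)) ⊆
          closure (interior (A ∩ B)) := by
        intro x hx
        have h1 : interior (closure (interior B)) ∩ closure (interior A) ⊆
            closure (interior (closure (interior B)) ∩ interior A) :=
          isOpen_interior.inter_closure
        have h2 : interior (closure (interior B)) ∩ interior A ⊆
            closure (interior A ∩ interior B) := by
          intro y hy
          have h : interior A ∩ closure (interior B) ⊆ closure (interior A ∩ interior B) :=
            isOpen_interior.inter_closure
          exact h ⟨hy.2, interior_subset hy.1⟩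
        have h3 : closure (interior (closure (interior B)) ∩ interior A) ⊆
            closure (interior A ∩ interior B) := by
          calc closure (interior (closure (interior B)) ∩ interior A)
              ⊆ closure (closure (interior A ∩ interior B)) := closure_mono h2
            _ = closure (interior A ∩ interior B) := closure_closure
        have hx' : x ∈ closure (interior A ∩ interior B) :=
          h3 (h1 ⟨hx.2, interior_subset hx.1⟩)
        rwa [← interior_inter] at hx'
      intro x hx
      exact interior_maximal hsub (isOpen_interior.inter isOpen_interior) ⟨hA hx.1, hB hx.2⟩
    isOpen_sUnion := by
      intro S hS x hx
      obtain ⟨t, htS, hxt⟩ := hx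
      have h : interior (closure (interior t)) ⊆ interior (closure (interior (⋃₀ S))) :=
        interior_mono (closure_mono (interior_mono (subset_sUnion_of_mem htS)))
      exact h (hS t htS hxt) }

/-- `A` is semi-open w.r.t. `T` if `A ⊆ Cl (Int A)`. -/
def SemiOpen (T : TopologicalSpace X) (A : Set X) : Prop :=
  letI := T
  A ⊆ closure (interior A)

/-- `A` is semi-closed if its complement is semi-open. -/
def SemiClosed (T : TopologicalSpace X) (A : Set X) : Prop :=
  SemiOpen T Aᶜ

/-- The semi-closure of `A`: the intersection of all semi-closed sets containing `A`. -/
def sCl (T : TopologicalSpace X) (A : Set X) : Set X :=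
  ⋂₀ {C | SemiClosed T C ∧ A ⊆ C}

/-- `A` is sg-closed if `sCl A ⊆ U` whenever `A ⊆ U` with `U` semi-open. -/
def SgClosed (T : TopologicalSpace X) (A : Set X) : Prop :=
  ∀ U : Set X, SemiOpen T U → A ⊆ U → sCl T A ⊆ U

/-- `A` is sg-open if its complement is sg-closed. -/
def SgOpen (T : TopologicalSpace X) (A : Set X) : Prop :=
  SgClosed T Aᶜ

/-- `A` is regular closed w.r.t. `T` if `A = Cl (Int A)`. -/
def RegClosed (T : TopologicalSpace X) (A : Set X) : Prop :=
  letI := T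
  A = closure (interior A)

/-- A family `𝒱` refines a family `𝒰` if every member of `𝒱` is contained in a member of `𝒰`. -/
def Refines (𝒱 𝒰 : Set (Set X)) : Prop :=
  ∀ V ∈ 𝒱, ∃ U ∈ 𝒰, V ⊆ U

/-- A family of sets is locally finite if every point has a neighbourhood
meeting only finitely many members. -/
def LocFinite (T : TopologicalSpace X) (𝒱 : Set (Set X)) : Prop :=
  ∀ x : X, ∃ N ∈ @nhds X T x, {V ∈ 𝒱 | (V ∩ N).Nonempty}.Finite

/-- A family of sets is locally countable if every point has a neighbourhood
meeting only countably many members. -/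
def LocCountable (T : TopologicalSpace X) (𝒱 : Set (Set X)) : Prop :=
  ∀ x : X, ∃ N ∈ @nhds X T x, {V ∈ 𝒱 | (V ∩ N).Nonempty}.Countable

/-- A family of sets is discrete if every point has a neighbourhood
meeting at most one member. -/
def DiscreteFam (T : TopologicalSpace X) (𝒱 : Set (Set X)) : Prop :=
  ∀ x : X, ∃ N ∈ @nhds X T x, {V ∈ 𝒱 | (V ∩ N).Nonempty}.Subsingleton

/-- A family is σ-discrete if it is a countable union of discrete families. -/
def SigmaDiscrete (T : TopologicalSpace X) (𝒱 : Set (Set X)) : Prop :=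
  ∃ 𝒲 : ℕ → Set (Set X), 𝒱 = ⋃ n, 𝒲 n ∧ ∀ n, DiscreteFam T (𝒲 n)

/-- A family is closure-preserving if for every subfamily the closure of the
union is the union of the closures. -/
def ClosurePreserving (T : TopologicalSpace X) (𝒲 : Set (Set X)) : Prop :=
  letI := T
  ∀ 𝒲' ⊆ 𝒲, closure (⋃₀ 𝒲') = ⋃ W ∈ 𝒲', closure W

/-- A family is σ-closure-preserving if it is a countable union of
closure-preserving families. -/
def SigmaClosurePreserving (T : TopologicalSpace X) (𝒱 : Set (Set X)) : Prop :=
  ∃ 𝒲 : ℕ → Set (Set X), 𝒱 = ⋃ n, 𝒲 n ∧ ∀ n, ClosurePreserving T (𝒲 n)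

/-- Semi-compact: every semi-open cover has a finite subcover. -/
def SemiCompact (T : TopologicalSpace X) : Prop :=
  ∀ 𝒰 : Set (Set X), (∀ U ∈ 𝒰, SemiOpen T U) → ⋃₀ 𝒰 = univ →
    ∃ 𝒱 ⊆ 𝒰, 𝒱.Finite ∧ ⋃₀ 𝒱 = univ

/-- S-closed: for every semi-open cover there is a finite subfamily
whose closures cover. -/
def SClosed (T : TopologicalSpace X) : Prop :=
  letI := T
  ∀ 𝒰 : Set (Set X), (∀ U ∈ 𝒰, SemiOpen T U) → ⋃₀ 𝒰 = univ →
    ∃ 𝒱 ⊆ 𝒰, 𝒱.Finite ∧ (⋃ V ∈ 𝒱, closure V) = univ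

/-- s-closed: for every semi-open cover there is a finite subfamily
whose semi-closures cover. -/
def SmallSClosed (T : TopologicalSpace X) : Prop :=
  ∀ 𝒰 : Set (Set X), (∀ U ∈ 𝒰, SemiOpen T U) → ⋃₀ 𝒰 = univ →
    ∃ 𝒱 ⊆ 𝒰, 𝒱.Finite ∧ (⋃ V ∈ 𝒱, sCl T V) = univ

/-- rc-Lindelöf: every regular closed cover has a countable subcover. -/
def RcLindelof (T : TopologicalSpace X) : Prop :=
  ∀ 𝒰 : Set (Set X), (∀ U ∈ 𝒰, RegClosed T U) → ⋃₀ 𝒰 = univ →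
    ∃ 𝒱 ⊆ 𝒰, 𝒱.Countable ∧ ⋃₀ 𝒱 = univ

/-- sg-compact: every sg-open cover has a finite subcover. -/
def SgCompact (T : TopologicalSpace X) : Prop :=
  ∀ 𝒰 : Set (Set X), (∀ U ∈ 𝒰, SgOpen T U) → ⋃₀ 𝒰 = univ →
    ∃ 𝒱 ⊆ 𝒰, 𝒱.Finite ∧ ⋃₀ 𝒱 = univ

/-- `A` is S-closed relative to `X`: every cover of `A` by semi-open sets of `X`
has a finite subfamily whose closures cover `A`. -/
def SClosedRel (T : TopologicalSpace X) (A : Set X) : Prop :=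
  letI := T
  ∀ 𝒰 : Set (Set X), (∀ U ∈ 𝒰, SemiOpen T U) → A ⊆ ⋃₀ 𝒰 →
    ∃ 𝒱 ⊆ 𝒰, 𝒱.Finite ∧ A ⊆ ⋃ V ∈ 𝒱, closure V

/-- `A` is s-closed relative to `X`: every cover of `A` by semi-open sets of `X`
has a finite subfamily whose semi-closures cover `A`. -/
def SmallSClosedRel (T : TopologicalSpace X) (A : Set X) : Prop :=
  ∀ 𝒰 : Set (Set X), (∀ U ∈ 𝒰, SemiOpen T U) → A ⊆ ⋃₀ 𝒰 →
    ∃ 𝒱 ⊆ 𝒰, 𝒱.Finite ∧ A ⊆ ⋃ V ∈ 𝒱, sCl T V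

/-- Locally S-closed: every point has a neighbourhood which is S-closed relative to `X`. -/
def LocallySClosed (T : TopologicalSpace X) : Prop :=
  ∀ x : X, ∃ N ∈ @nhds X T x, SClosedRel T N

/-- Locally s-closed: every point has a neighbourhood which is s-closed relative to `X`. -/
def LocallySmallSClosed (T : TopologicalSpace X) : Prop :=
  ∀ x : X, ∃ N ∈ @nhds X T x, SmallSClosedRel T N

/-- para-S-closed: every semi-open cover has a locally finite refinement by
semi-open sets whose union is dense. -/
def ParaSClosed (T : TopologicalSpace X) : Prop :=
  letI := T
  ∀ 𝒰 : Set (Set X), (∀ U ∈ 𝒰, SemiOpen T U) → ⋃₀ 𝒰 = univ →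
    ∃ 𝒱 : Set (Set X), (∀ V ∈ 𝒱, SemiOpen T V) ∧ LocFinite T 𝒱 ∧ Refines 𝒱 𝒰 ∧
      closure (⋃₀ 𝒱) = univ

/-- para-rc-Lindelöf: every regular closed cover has a locally countable
refinement by regular closed sets. -/
def ParaRcLindelof (T : TopologicalSpace X) : Prop :=
  ∀ 𝒰 : Set (Set X), (∀ U ∈ 𝒰, RegClosed T U) → ⋃₀ 𝒰 = univ →
    ∃ 𝒱 : Set (Set X), (∀ V ∈ 𝒱, RegClosed T V) ∧ LocCountable T 𝒱 ∧ Refines 𝒱 𝒰 ∧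
      ⋃₀ 𝒱 = univ

/-- α-subparacompact: every α-open cover has a σ-discrete closed refinement covering `X`. -/
def AlphaSubparacompact (T : TopologicalSpace X) : Prop :=
  ∀ 𝒰 : Set (Set X), (∀ U ∈ 𝒰, AlphaOpen T U) → ⋃₀ 𝒰 = univ →
    ∃ 𝒱 : Set (Set X), (∀ V ∈ 𝒱, @IsClosed X T V) ∧ SigmaDiscrete T 𝒱 ∧ Refines 𝒱 𝒰 ∧
      ⋃₀ 𝒱 = univ

/-- gα-closed: `Cl_α A ⊆ U` whenever `A ⊆ U` with `U` α-open. -/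
def GAlphaClosed (T : TopologicalSpace X) (A : Set X) : Prop :=
  ∀ U : Set X, AlphaOpen T U → A ⊆ U → @closure X (alphaTop T) A ⊆ U

/-- α-paracompact: every α-open cover has a locally finite open refinement. -/
def AlphaParacompact (T : TopologicalSpace X) : Prop :=
  ∀ 𝒰 : Set (Set X), (∀ U ∈ 𝒰, AlphaOpen T U) → ⋃₀ 𝒰 = univ →
    ∃ 𝒱 : Set (Set X), (∀ V ∈ 𝒱, T.IsOpen V) ∧ LocFinite T 𝒱 ∧ Refines 𝒱 𝒰 ∧
      ⋃₀ 𝒱 = univ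


namespace AlphaSubparaAux

section Helpers
variable {X : Type u} [T : TopologicalSpace X]

theorem IsOpen.alphaOpen' {A : Set X} (h : IsOpen A) : AlphaOpen T A := by
  show A ⊆ interior (closure (interior A))
  rw [h.interior_eq]
  exact interior_maximal subset_closure h

theorem alphaOpen_iUnion' {κ : Sort*} {f : κ → Set X} (h : ∀ i, AlphaOpen T (f i)) :
    AlphaOpen T (⋃ i, f i) := by
  letI A := alphaTop T
  exact @isOpen_iUnion X κ A f h

theorem AlphaOpen.inter' {A B : Set X} (hA : AlphaOpen T A) (hB : AlphaOpen T B) :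
    AlphaOpen T (A ∩ B) :=
  @IsOpen.inter X (alphaTop T) A B hA hB

theorem discreteFam_empty : DiscreteFam T (∅ : Set (Set X)) := by
  intro x
  exact ⟨univ, Filter.univ_mem, by intro a ha; simp at ha⟩

theorem DiscreteFam.closurePreserving' {𝒲 : Set (Set X)} (h : DiscreteFam T 𝒲) :
    ClosurePreserving T 𝒲 := by
  intro 𝒲' h𝒲'
  apply Subset.antisymm
  · intro x hx
    by_contra hxn
    obtain ⟨N, hN, hsub⟩ := h x
    obtain ⟨O, hON, hO, hxO⟩ := mem_nhds_iff.mp hN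
    have h1 : (O ∩ ⋃₀ 𝒲').Nonempty := by
      rw [mem_closure_iff] at hx
      exact hx O hO hxO
    obtain ⟨y, hyO, V₀, hV₀, hyV₀⟩ := h1
    have hxV₀ : x ∉ closure V₀ := by
      intro hc
      exact hxn (mem_iUnion₂.mpr ⟨V₀, hV₀, hc⟩)
    have hO' : IsOpen (O ∩ (closure V₀)ᶜ) := hO.inter isClosed_closure.isOpen_compl
    have hxO' : x ∈ O ∩ (closure V₀)ᶜ := ⟨hxO, hxV₀⟩
    have h2 : ((O ∩ (closure V₀)ᶜ) ∩ ⋃₀ 𝒲').Nonempty := by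
      rw [mem_closure_iff] at hx
      exact hx _ hO' hxO'
    obtain ⟨z, ⟨hzO, hzc⟩, V₁, hV₁, hzV₁⟩ := h2
    have e : V₁ = V₀ := by
      apply hsub
      · exact ⟨h𝒲' hV₁, ⟨z, hzV₁, hON hzO⟩⟩
      · exact ⟨h𝒲' hV₀, ⟨y, hyV₀, hON hyO⟩⟩
    exact hzc (subset_closure (e ▸ hzV₁))
  · intro x hx
    obtain ⟨V, hV, hxV⟩ := mem_iUnion₂.mp hx
    exact closure_mono (subset_sUnion_of_mem hV) hxV

theorem cp_sUnion_closed {𝒲 : Set (Set X)} (hcp : ClosurePreserving T 𝒲)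
    (hcl : ∀ W ∈ 𝒲, IsClosed W) {𝒮 : Set (Set X)} (h𝒮 : 𝒮 ⊆ 𝒲) : IsClosed (⋃₀ 𝒮) := by
  rw [← closure_eq_iff_isClosed]
  rw [hcp 𝒮 h𝒮]
  apply Subset.antisymm
  · intro x hx
    obtain ⟨W, hW, hxW⟩ := mem_iUnion₂.mp hx
    rw [(hcl W (h𝒮 hW)).closure_eq] at hxW
    exact ⟨W, hW, hxW⟩
  · intro x ⟨W, hW, hxW⟩
    exact mem_iUnion₂.mpr ⟨W, hW, subset_closure hxW⟩

end Helpers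

section H2
variable {X : Type u} [T : TopologicalSpace X]

/-- indexed discreteness of a family of sets -/
def IdxDiscrete {ι : Type*} (P : ι → Set X) : Prop :=
  ∀ x : X, ∃ N ∈ @nhds X T x, {γ : ι | (P γ ∩ N).Nonempty}.Subsingleton

theorem IdxDiscrete.range {ι : Type*} {P : ι → Set X} (h : IdxDiscrete P) :
    DiscreteFam T {S | ∃ γ, S = P γ} := by
  intro x
  obtain ⟨N, hN, hsub⟩ := h x
  refine ⟨N, hN, ?_⟩
  rintro S₁ ⟨⟨γ₁, rfl⟩, hne₁⟩ S₂ ⟨⟨γ₂, rfl⟩, hne₂⟩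
  rw [hsub hne₁ hne₂]

/-- merging discrete families sitting inside the members of an indexed discrete family -/
theorem IdxDiscrete.merge {ι : Type*} {P : ι → Set X} (h : IdxDiscrete P)
    (Q : ι → Set (Set X)) (hQ : ∀ γ, DiscreteFam T (Q γ))
    (hsub : ∀ γ, ∀ S ∈ Q γ, S ⊆ P γ) :
    DiscreteFam T {S | ∃ γ, S ∈ Q γ} := by
  intro x
  obtain ⟨N₀, hN₀, hsub₀⟩ := h x
  by_cases hc : ∃ γ₀, (P γ₀ ∩ N₀).Nonempty
  · obtain ⟨γ₀, hγ₀⟩ := hc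
    obtain ⟨N₁, hN₁, hsub₁⟩ := hQ γ₀ x
    refine ⟨N₀ ∩ N₁, Filter.inter_mem hN₀ hN₁, ?_⟩
    rintro S₁ ⟨⟨γ₁, hS₁⟩, hne₁⟩ S₂ ⟨⟨γ₂, hS₂⟩, hne₂⟩
    have e₁ : γ₁ = γ₀ := by
      apply hsub₀ _ hγ₀
      obtain ⟨y, hy⟩ := hne₁
      exact ⟨y, hsub γ₁ S₁ hS₁ hy.1, hy.2.1⟩
    have e₂ : γ₂ = γ₀ := by
      apply hsub₀ _ hγ₀
      obtain ⟨y, hy⟩ := hne₂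
      exact ⟨y, hsub γ₂ S₂ hS₂ hy.1, hy.2.1⟩
    subst e₁; subst e₂
    apply hsub₁
    · exact ⟨hS₁, hne₁.mono (inter_subset_inter_right _ inter_subset_right)⟩
    · exact ⟨hS₂, hne₂.mono (inter_subset_inter_right _ inter_subset_right)⟩
  · refine ⟨N₀, hN₀, ?_⟩
    rintro S₁ ⟨⟨γ₁, hS₁⟩, hne₁⟩ S₂ hS₂
    exact absurd ⟨hne₁.choose, hsub γ₁ S₁ hS₁ hne₁.choose_spec.1, hne₁.choose_spec.2⟩
      (fun hh => hc ⟨γ₁, hh⟩)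

theorem sigmaDiscrete_iUnion {J : Type*} [Encodable J] (F : J → Set (Set X))
    (h : ∀ j, DiscreteFam T (F j)) : SigmaDiscrete T (⋃ j, F j) := by
  classical
  refine ⟨fun n => match Encodable.decode (α := J) n with
    | some j => F j
    | none => ∅, ?_, ?_⟩
  · ext S
    simp only [mem_iUnion]
    constructor
    · rintro ⟨j, hj⟩
      refine ⟨Encodable.encode j, ?_⟩
      rw [Encodable.encodek]
      exact hj
    · rintro ⟨n, hn⟩
      rcases hd : Encodable.decode (α := J) n with _ | j
      · rw [hd] at hn; exact absurd hn (by simp)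
      · rw [hd] at hn; exact ⟨j, hn⟩
  · intro n
    simp only []
    rcases hd : Encodable.decode (α := J) n with _ | j
    · intro x
      exact ⟨univ, Filter.univ_mem, by rintro a ⟨ha, _⟩; simp at ha⟩
    · exact h j

end H2

section Core
variable {X : Type u} [T : TopologicalSpace X] {ι : Type u}

/-- The union of the cover members strictly `r`-below `γ`. -/
def Vs (r : ι → ι → Prop) (U : ι → Set X) (γ : ι) : Set X := ⋃ j, ⋃ (_ : r j γ), U j

variable (r : ι → ι → Prop) (U : ι → Set X) (C : Set X)

structure Node where
  fam : Set (Set X)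
  tg : Set X → Option (ι × Bool)
  dom : Set X
  closed_fam : ∀ G ∈ fam, IsClosed G
  cpU : ∀ 𝒮 ⊆ fam, IsClosed (⋃₀ 𝒮)
  dom_closed : IsClosed dom
  dom_subC : dom ⊆ C
  inv_A : ∀ G ∈ fam, ∀ γ : ι, tg G = some (γ, false) → G ⊆ Vs r U γ
  inv_B : ∀ G ∈ fam, ∀ γ : ι, tg G = some (γ, true) → G ⊆ U γ
  cover_pt : ∀ x ∈ dom, ∃ γ : ι, (x ∈ Vs r U γ ∨ x ∈ U γ) ∧
    x ∉ ⋃₀ {H | H ∈ fam ∧ ∃ s b, tg H = some (s, b) ∧ r s γ}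

variable {r U C}

/-- The part of the family tagged strictly below `γ`. -/
def Node.W (d : Node r U C) (γ : ι) : Set X :=
  ⋃₀ {H | H ∈ d.fam ∧ ∃ s b, d.tg H = some (s, b) ∧ r s γ}

def Node.Wtot (d : Node r U C) : Set X := ⋃₀ {H | H ∈ d.fam ∧ d.tg H ≠ none}

def Node.Sx (d : Node r U C) (x : X) : Set ι :=
  {s | ∃ H, H ∈ d.fam ∧ x ∈ H ∧ ∃ b, d.tg H = some (s, b)}

def IsStep (p c : Node r U C) : Prop :=
  (C ∩ c.Wtot ⊆ c.dom) ∧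
  (∀ G ∈ c.fam, c.tg G = none → G ∩ p.dom = ∅) ∧
  (∀ G ∈ c.fam, ∀ γ b, c.tg G = some (γ, b) → G ∩ p.W γ = ∅)

theorem Node.W_closed (d : Node r U C) (γ : ι) : IsClosed (d.W γ) :=
  d.cpU _ (fun _ hH => hH.1)

theorem step_exists [IsWellOrder ι r]
    (Hσ : ∀ 𝒰 : Set (Set X), (∀ A ∈ 𝒰, AlphaOpen T A) → ⋃₀ 𝒰 = univ →
      ∃ 𝒱, (∀ V ∈ 𝒱, IsClosed V) ∧ SigmaClosurePreserving T 𝒱 ∧ Refines 𝒱 𝒰 ∧ ⋃₀ 𝒱 = univ)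
    (hU : ∀ i, AlphaOpen T (U i)) (hC : IsClosed C) (p : Node r U C) :
    ∃ c : ℕ → Node r U C, (∀ k, IsStep p (c k)) ∧ ∀ x : X, ∃ k, ∃ G ∈ (c k).fam, x ∈ G := by
  classical
  set 𝒞 : Set (Set X) :=
    {S | (∃ γ, S = Vs r U γ \ p.W γ) ∨ (∃ γ, S = U γ \ p.W γ) ∨ S = p.domᶜ} with h𝒞
  have halpha : ∀ S ∈ 𝒞, AlphaOpen T S := by
    rintro S (⟨γ, rfl⟩ | ⟨γ, rfl⟩ | rfl)
    · rw [diff_eq]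
      exact AlphaOpen.inter' (alphaOpen_iUnion' fun j => alphaOpen_iUnion' fun _ => hU j)
        (IsOpen.alphaOpen' (p.W_closed γ).isOpen_compl)
    · rw [diff_eq]
      exact AlphaOpen.inter' (hU γ) (IsOpen.alphaOpen' (p.W_closed γ).isOpen_compl)
    · exact IsOpen.alphaOpen' p.dom_closed.isOpen_compl
  have hcov𝒞 : ⋃₀ 𝒞 = univ := by
    apply eq_univ_of_forall; intro x
    by_cases hx : x ∈ p.dom
    · obtain ⟨γ, hor, hW⟩ := p.cover_pt x hx
      cases hor with
      | inl h => exact ⟨Vs r U γ \ p.W γ, Or.inl ⟨γ, rfl⟩, h, hW⟩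
      | inr h => exact ⟨U γ \ p.W γ, Or.inr (Or.inl ⟨γ, rfl⟩), h, hW⟩
    · exact ⟨p.domᶜ, Or.inr (Or.inr rfl), hx⟩
  obtain ⟨𝒱, hcl, ⟨𝒲, h𝒱eq, hcp⟩, href, hcovX⟩ := Hσ 𝒞 halpha hcov𝒞
  have htag : ∀ G : Set X, ∃ o : Option (ι × Bool),
      G ∈ 𝒱 → ((o = none → G ∩ p.dom = ∅) ∧
        (∀ γ, o = some (γ, false) → G ⊆ Vs r U γ \ p.W γ) ∧
        (∀ γ, o = some (γ, true) → G ⊆ U γ \ p.W γ)) := by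
    intro G
    by_cases hG : G ∈ 𝒱
    · obtain ⟨S, hS𝒞, hGS⟩ := href G hG
      rcases hS𝒞 with ⟨γ, rfl⟩ | ⟨γ, rfl⟩ | rfl
      · refine ⟨some (γ, false), fun _ => ⟨by simp, ?_, by simp⟩⟩
        intro γ' hh
        rw [Option.some_inj, Prod.mk.injEq] at hh
        exact hh.1 ▸ hGS
      · refine ⟨some (γ, true), fun _ => ⟨by simp, by simp, ?_⟩⟩
        intro γ' hh
        rw [Option.some_inj, Prod.mk.injEq] at hh
        exact hh.1 ▸ hGS
      · refine ⟨none, fun _ => ⟨fun _ => ?_, by simp, by simp⟩⟩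
        apply eq_empty_of_subset_empty
        rintro y ⟨hyG, hyd⟩
        exact absurd hyd (hGS hyG)
    · exact ⟨none, fun h => absurd h hG⟩
  choose tgf htgf using htag
  have hmem : ∀ k, 𝒲 k ⊆ 𝒱 := by
    intro k
    rw [h𝒱eq]
    exact subset_iUnion 𝒲 k
  have hclk : ∀ k, ∀ G ∈ 𝒲 k, IsClosed G := fun k G hG => hcl G (hmem k hG)
  have hcpUk : ∀ k, ∀ 𝒮 ⊆ 𝒲 k, IsClosed (⋃₀ 𝒮) :=
    fun k 𝒮 h𝒮 => cp_sUnion_closed (hcp k) (hclk k) h𝒮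
  refine ⟨fun k =>
    { fam := 𝒲 k
      tg := tgf
      dom := C ∩ ⋃₀ {H | H ∈ 𝒲 k ∧ tgf H ≠ none}
      closed_fam := hclk k
      cpU := hcpUk k
      dom_closed := hC.inter (hcpUk k _ (fun _ hH => hH.1))
      dom_subC := inter_subset_left
      inv_A := fun G hG γ htg y hy => ((htgf G (hmem k hG)).2.1 γ htg hy).1
      inv_B := fun G hG γ htg y hy => ((htgf G (hmem k hG)).2.2 γ htg hy).1
      cover_pt := by
        rintro x ⟨hxC, Hx, ⟨hHx𝒲, hHtg⟩, hxHx⟩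
        have hne : {s : ι | ∃ H, H ∈ 𝒲 k ∧ x ∈ H ∧ ∃ b, tgf H = some (s, b)}.Nonempty := by
          rcases ho : tgf Hx with _ | ⟨s, b⟩
          · exact absurd ho hHtg
          · exact ⟨s, Hx, hHx𝒲, hxHx, b, ho⟩
        obtain ⟨m, hmS, hmin⟩ := (IsWellFounded.wf (r := r)).has_min _ hne
        obtain ⟨H, hH𝒲, hxH', b, hb⟩ := hmS
        refine ⟨m, ?_, ?_⟩
        · cases b with
          | false => exact Or.inl (((htgf H (hmem k hH𝒲)).2.1 m hb) hxH').1
          | true => exact Or.inr (((htgf H (hmem k hH𝒲)).2.2 m hb) hxH').1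
        · rintro ⟨H', ⟨hH'𝒲, s', b', hs', hrs'⟩, hxH''⟩
          exact hmin s' ⟨H', hH'𝒲, hxH'', b', hs'⟩ hrs' } , ?_, ?_⟩
  · intro k
    refine ⟨subset_rfl, fun G hG htg => (htgf G (hmem k hG)).1 htg, fun G hG γ b htg => ?_⟩
    cases b with
    | false =>
      apply eq_empty_of_subset_empty
      rintro y ⟨hyG, hyW⟩
      exact absurd hyW (((htgf G (hmem k hG)).2.1 γ htg) hyG).2
    | true =>
      apply eq_empty_of_subset_empty
      rintro y ⟨hyG, hyW⟩
      exact absurd hyW (((htgf G (hmem k hG)).2.2 γ htg) hyG).2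
  · intro x
    have hx : x ∈ ⋃₀ 𝒱 := hcovX ▸ mem_univ x
    obtain ⟨G, hG, hxG⟩ := hx
    rw [h𝒱eq] at hG
    obtain ⟨k, hGk⟩ := mem_iUnion.mp hG
    exact ⟨k, G, hGk, hxG⟩

end Core

theorem discreteFam_interRight {X : Type u} [T : TopologicalSpace X] {𝒲 : Set (Set X)}
    (h : DiscreteFam T 𝒲) (B : Set X) : DiscreteFam T {S | ∃ Q ∈ 𝒲, S = Q ∩ B} := by
  intro x
  obtain ⟨N, hN, hsub⟩ := h x
  refine ⟨N, hN, ?_⟩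
  rintro S₁ ⟨⟨Q₁, hQ₁, rfl⟩, hne₁⟩ S₂ ⟨⟨Q₂, hQ₂, rfl⟩, hne₂⟩
  have e : Q₁ = Q₂ := by
    apply hsub
    · exact ⟨hQ₁, hne₁.mono (inter_subset_inter_left _ inter_subset_left)⟩
    · exact ⟨hQ₂, hne₂.mono (inter_subset_inter_left _ inter_subset_left)⟩
  rw [e]

theorem discreteFam_mono {X : Type u} [T : TopologicalSpace X] {𝒜 ℬ : Set (Set X)}
    (hsub : 𝒜 ⊆ ℬ) (h : DiscreteFam T ℬ) : DiscreteFam T 𝒜 := by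
  intro x
  obtain ⟨N, hN, hs⟩ := h x
  exact ⟨N, hN, fun V₁ hV₁ V₂ hV₂ => hs ⟨hsub hV₁.1, hV₁.2⟩ ⟨hsub hV₂.1, hV₂.2⟩⟩

theorem mainLemma {X : Type u} [T : TopologicalSpace X]
    (Hσ : ∀ 𝒰 : Set (Set X), (∀ A ∈ 𝒰, AlphaOpen T A) → ⋃₀ 𝒰 = univ →
      ∃ 𝒱, (∀ V ∈ 𝒱, IsClosed V) ∧ SigmaClosurePreserving T 𝒱 ∧ Refines 𝒱 𝒰 ∧ ⋃₀ 𝒱 = univ) :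
    ∀ o : Ordinal.{u}, ∀ (ι : Type u) (r : ι → ι → Prop) (iwo : IsWellOrder ι r),
      @Ordinal.type ι r iwo = o → ∀ (U : ι → Set X), (∀ i, AlphaOpen T (U i)) →
      ∀ (C : Set X), IsClosed C → C ⊆ (⋃ i, U i) →
      ∃ 𝒱 : Set (Set X), (∀ V ∈ 𝒱, IsClosed V) ∧ SigmaDiscrete T 𝒱 ∧
        (∀ V ∈ 𝒱, ∃ i, V ⊆ U i) ∧ C ⊆ ⋃₀ 𝒱 := by
  intro o
  induction o using Ordinal.induction with
  | _ o IH =>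
  intro ι r iwo htype U hU C hC hcov
  haveI := iwo
  classical
  -- the root node
  let root : Node r U C :=
    { fam := ∅
      tg := fun _ => none
      dom := C
      closed_fam := fun G hG => absurd hG (notMem_empty G)
      cpU := by
        intro 𝒮 h𝒮
        rw [subset_empty_iff.mp h𝒮, sUnion_empty]
        exact isClosed_empty
      dom_closed := hC
      dom_subC := subset_rfl
      inv_A := fun G hG => absurd hG (notMem_empty G)
      inv_B := fun G hG => absurd hG (notMem_empty G)
      cover_pt := by
        intro x hx
        obtain ⟨i, hi⟩ := mem_iUnion.mp (hcov hx)
        exact ⟨i, Or.inr hi, by rintro ⟨H, ⟨hH, -⟩, -⟩; exact notMem_empty H hH⟩ }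
  obtain ⟨ch, hch1, hch2⟩ :
      ∃ ch : Node r U C → ℕ → Node r U C,
        (∀ p k, IsStep p (ch p k)) ∧ ∀ p, ∀ x : X, ∃ k, ∃ G ∈ (ch p k).fam, x ∈ G := by
    have hstep : ∀ p : Node r U C, ∃ c : ℕ → Node r U C,
        (∀ k, IsStep p (c k)) ∧ ∀ x : X, ∃ k, ∃ G ∈ (c k).fam, x ∈ G :=
      fun p => step_exists Hσ hU hC p
    choose ch h1 h2 using hstep
    exact ⟨ch, h1, h2⟩
  -- the tree of nodes
  let nd : List ℕ → Node r U C := fun t => List.rec root (fun k _ ihn => ch ihn k) t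
  have nd_cons : ∀ k t, nd (k :: t) = ch (nd t) k := fun k t => rfl
  -- the pieces
  let PP : List ℕ → ℕ → Bool → ι → Set X := fun t k b γ =>
    (⋃₀ {H | H ∈ (nd t).fam ∧ ∃ s b', (nd t).tg H = some (s, b') ∧ (s = γ ∨ r s γ)}) ∩
    (⋃₀ {G | G ∈ (nd (k :: t)).fam ∧ (nd (k :: t)).tg G = some (γ, b)})
  have PP_closed : ∀ t k b γ, IsClosed (PP t k b γ) := fun t k b γ =>
    ((nd t).cpU _ fun H hH => hH.1).inter ((nd (k :: t)).cpU _ fun G hG => hG.1)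
  have PP_subB : ∀ t k γ, PP t k true γ ⊆ U γ := by
    rintro t k γ y ⟨-, G, ⟨hGf, hGt⟩, hyG⟩
    exact (nd (k :: t)).inv_B G hGf γ hGt hyG
  have PP_subA : ∀ t k γ, PP t k false γ ⊆ Vs r U γ := by
    rintro t k γ y ⟨-, G, ⟨hGf, hGt⟩, hyG⟩
    exact (nd (k :: t)).inv_A G hGf γ hGt hyG
  -- core discreteness of the pieces
  have PP_disc : ∀ t k b, IdxDiscrete (T := T) (PP t k b) := by
    intro t k b x
    set N : Set X :=
      (⋃₀ {H | H ∈ (nd t).fam ∧ x ∉ H})ᶜ ∩ (⋃₀ {G | G ∈ (nd (k :: t)).fam ∧ x ∉ G})ᶜ with hNdef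
    have hNmem : N ∈ @nhds X T x := by
      apply Filter.inter_mem
      · exact (((nd t).cpU _ fun H hH => hH.1).isOpen_compl).mem_nhds
          (by rintro ⟨H, ⟨-, hnx⟩, hx⟩; exact hnx hx)
      · exact (((nd (k :: t)).cpU _ fun G hG => hG.1).isOpen_compl).mem_nhds
          (by rintro ⟨G, ⟨-, hnx⟩, hx⟩; exact hnx hx)
    refine ⟨N, hNmem, ?_⟩
    have key : ∀ γ, (PP t k b γ ∩ N).Nonempty →
        (∃ H, H ∈ (nd t).fam ∧ x ∈ H ∧ ∃ s b', (nd t).tg H = some (s, b') ∧ (s = γ ∨ r s γ)) ∧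
        x ∉ (nd t).W γ := by
      rintro γ ⟨y, ⟨⟨H, ⟨hHf, hHtag⟩, hyH⟩, G, ⟨hGf, hGtag⟩, hyG⟩, hyN₁, hyN₂⟩
      constructor
      · have hxH : x ∈ H := by
          by_contra hnx
          exact hyN₁ ⟨H, ⟨hHf, hnx⟩, hyH⟩
        exact ⟨H, hHf, hxH, hHtag⟩
      · have hxG : x ∈ G := by
          by_contra hnx
          exact hyN₂ ⟨G, ⟨hGf, hnx⟩, hyG⟩
        intro hW
        have hdisj := (hch1 (nd t) k).2.2 G hGf γ b hGtag
        exact absurd (hdisj ▸ (⟨hxG, hW⟩ : x ∈ G ∩ (nd t).W γ)) (notMem_empty x)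
    intro γ₁ hγ₁ γ₂ hγ₂
    obtain ⟨⟨H₁, hH₁f, hxH₁, s₁, b₁, ht₁, hle₁⟩, hnW₁⟩ := key γ₁ hγ₁
    obtain ⟨⟨H₂, hH₂f, hxH₂, s₂, b₂, ht₂, hle₂⟩, hnW₂⟩ := key γ₂ hγ₂
    have he₁ : s₁ = γ₁ := by
      rcases hle₁ with h | h
      · exact h
      · exact absurd ⟨H₁, ⟨hH₁f, s₁, b₁, ht₁, h⟩, hxH₁⟩ hnW₁
    have he₂ : s₂ = γ₂ := by
      rcases hle₂ with h | h
      · exact h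
      · exact absurd ⟨H₂, ⟨hH₂f, s₂, b₂, ht₂, h⟩, hxH₂⟩ hnW₂
    subst he₁; subst he₂
    rcases trichotomous_of r s₁ s₂ with h | h | h
    · exact absurd ⟨H₁, ⟨hH₁f, s₁, b₁, ht₁, h⟩, hxH₁⟩ hnW₂
    · exact h
    · exact absurd ⟨H₂, ⟨hH₂f, s₂, b₂, ht₂, h⟩, hxH₂⟩ hnW₁
  -- capture: every point of C lies in some piece
  have capture : ∀ x ∈ C, ∃ t k b γ, x ∈ PP t k b γ := by
    intro x hxC
    have main : ∀ γ : ι, ∀ t : List ℕ, x ∈ (nd t).dom →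
        (∃ H, H ∈ (nd t).fam ∧ x ∈ H ∧ ∃ b, (nd t).tg H = some (γ, b)) →
        (∀ s, (∃ H, H ∈ (nd t).fam ∧ x ∈ H ∧ ∃ b, (nd t).tg H = some (s, b)) → ¬ r s γ) →
        ∃ t' k' b' γ', x ∈ PP t' k' b' γ' := by
      intro γ₀
      induction γ₀ using WellFounded.induction (IsWellFounded.wf (r := r)) with
      | _ γ IHγ =>
      intro t hdom hmem hmin
      obtain ⟨k, G, hGf, hxG⟩ := hch2 (nd t) x
      have hGf : G ∈ (nd (k :: t)).fam := hGf
      have hstepk := hch1 (nd t) k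
      rcases ht : (nd (k :: t)).tg G with _ | ⟨s, b⟩
      · exfalso
        have hdisj := hstepk.2.1 G hGf ht
        exact absurd (hdisj ▸ (⟨hxG, hdom⟩ : x ∈ G ∩ (nd t).dom)) (notMem_empty x)
      · have hxnW : x ∉ (nd t).W s := by
          intro hW
          have hdisj := hstepk.2.2 G hGf s b ht
          exact absurd (hdisj ▸ (⟨hxG, hW⟩ : x ∈ G ∩ (nd t).W s)) (notMem_empty x)
        have hsγ : s = γ ∨ r s γ := by
          rcases trichotomous_of r s γ with h | h | h
          · exact Or.inr h
          · exact Or.inl h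
          · exfalso
            apply hxnW
            obtain ⟨H, hHf, hxH, b', htg'⟩ := hmem
            exact ⟨H, ⟨hHf, γ, b', htg', h⟩, hxH⟩
        rcases hsγ with he | hlt
        · subst he
          refine ⟨t, k, b, s, ?_, ⟨G, ⟨hGf, ht⟩, hxG⟩⟩
          obtain ⟨H, hHf, hxH, b', htg'⟩ := hmem
          exact ⟨H, ⟨hHf, s, b', htg', Or.inl rfl⟩, hxH⟩
        · have hxdom' : x ∈ (nd (k :: t)).dom := by
            apply (nd_cons k t ▸ hstepk.1)
            exact ⟨hxC, G, ⟨hGf, by rw [ht]; simp⟩, hxG⟩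
          have hne : {s' : ι | ∃ H, H ∈ (nd (k :: t)).fam ∧ x ∈ H ∧
              ∃ b'', (nd (k :: t)).tg H = some (s', b'')}.Nonempty := ⟨s, G, hGf, hxG, b, ht⟩
          obtain ⟨m, hmS, hmmin⟩ := (IsWellFounded.wf (r := r)).has_min _ hne
          have hrmγ : r m γ := by
            rcases trichotomous_of r m s with h | h | h
            · exact _root_.trans h hlt
            · exact h ▸ hlt
            · exact absurd h (hmmin s ⟨G, hGf, hxG, b, ht⟩)
          exact IHγ m hrmγ (k :: t) hxdom' hmS (fun s' hs' => hmmin s' hs')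
    -- start at a child of the root
    obtain ⟨k₀, G₀, hG₀f, hxG₀⟩ := hch2 root x
    have hstep₀ := hch1 root k₀
    have hG₀f' : G₀ ∈ (nd [k₀]).fam := hG₀f
    rcases ht₀ : (nd [k₀]).tg G₀ with _ | ⟨s₀, b₀⟩
    · exfalso
      have hdisj := hstep₀.2.1 G₀ hG₀f ht₀
      exact absurd (hdisj ▸ (⟨hxG₀, hxC⟩ : x ∈ G₀ ∩ root.dom)) (notMem_empty x)
    · have hxdom₀ : x ∈ (nd [k₀]).dom := by
        apply hstep₀.1
        exact ⟨hxC, G₀, ⟨hG₀f', by rw [ht₀]; simp⟩, hxG₀⟩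
      have hne : {s' : ι | ∃ H, H ∈ (nd [k₀]).fam ∧ x ∈ H ∧
          ∃ b'', (nd [k₀]).tg H = some (s', b'')}.Nonempty := ⟨s₀, G₀, hG₀f', hxG₀, b₀, ht₀⟩
      obtain ⟨m, hmS, hmmin⟩ := (IsWellFounded.wf (r := r)).has_min _ hne
      exact main m [k₀] hxdom₀ hmS (fun s' hs' => hmmin s' hs')
  -- apply the inductive hypothesis to the A-pieces
  have hIH : ∀ (t : List ℕ) (k : ℕ) (γ : ι), ∃ (𝒱' : Set (Set X)) (𝒲' : ℕ → Set (Set X)),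
      (∀ V ∈ 𝒱', IsClosed V) ∧ 𝒱' = (⋃ n, 𝒲' n) ∧ (∀ n, DiscreteFam T (𝒲' n)) ∧
      (∀ V ∈ 𝒱', ∃ i, V ⊆ U i) ∧ PP t k false γ ⊆ ⋃₀ 𝒱' := by
    intro t k γ
    have hlt : Ordinal.typein r γ < o := htype ▸ Ordinal.typein_lt_type r γ
    have hsub : PP t k false γ ⊆ ⋃ (j : {j | r j γ}), U j.1 := by
      intro y hy
      have := PP_subA t k γ hy
      obtain ⟨j, hj⟩ := mem_iUnion.mp this
      obtain ⟨hrj, hyj⟩ := mem_iUnion.mp hj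
      exact mem_iUnion.mpr ⟨⟨j, hrj⟩, hyj⟩
    obtain ⟨𝒱', hcl', ⟨𝒲', heq', hdisc'⟩, href', hcov'⟩ :=
      IH _ hlt {j | r j γ} (Subrel r {j | r j γ}) (inferInstanceAs (IsWellOrder _ (Subrel r (r · γ))))
        (Ordinal.type_subrel r γ) (fun j => U j.1) (fun j => hU j.1)
        (PP t k false γ) (PP_closed t k false γ) hsub
    exact ⟨𝒱', 𝒲', hcl', heq', hdisc',
      fun V hV => (href' V hV).elim (fun j hj => ⟨j.1, hj⟩), hcov'⟩
  choose 𝒱A 𝒲A hclA heqA hdiscA hrefA hcovA using hIH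
  -- the final family
  let F : List ℕ × ℕ × Option ℕ → Set (Set X) := fun j =>
    {S | (∃ γ, j.2.2 = none ∧ S = PP j.1 j.2.1 true γ) ∨
      (∃ γ n Q, j.2.2 = some n ∧ Q ∈ 𝒲A j.1 j.2.1 γ n ∧ S = Q ∩ PP j.1 j.2.1 false γ)}
  refine ⟨⋃ j, F j, ?_, ?_, ?_, ?_⟩
  · -- closedness
    intro V hV
    obtain ⟨⟨t, k, os⟩, hVj⟩ := mem_iUnion.mp hV
    rcases hVj with ⟨γ, -, rfl⟩ | ⟨γ, n, Q, -, hQ, rfl⟩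
    · exact PP_closed t k true γ
    · have hQ𝒱 : Q ∈ 𝒱A t k γ := by
        rw [heqA t k γ]
        exact mem_iUnion.mpr ⟨n, hQ⟩
      exact (hclA t k γ Q hQ𝒱).inter (PP_closed t k false γ)
  · -- σ-discreteness
    apply sigmaDiscrete_iUnion
    rintro ⟨t, k, os⟩
    rcases os with _ | n
    · apply discreteFam_mono ?_ (PP_disc t k true).range
      rintro S (⟨γ, -, rfl⟩ | ⟨γ, n, Q, hns, -, -⟩)
      · exact ⟨γ, rfl⟩
      · exact absurd hns (by simp)
    · apply discreteFam_mono ?_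
        ((PP_disc t k false).merge
          (fun γ => {S' | ∃ Q ∈ 𝒲A t k γ n, S' = Q ∩ PP t k false γ})
          (fun γ => discreteFam_interRight (hdiscA t k γ n) _)
          (by rintro γ S ⟨Q, hQ, rfl⟩; exact inter_subset_right))
      rintro S (⟨γ, hns, -⟩ | ⟨γ, n', Q, hns, hQ, rfl⟩)
      · exact absurd hns (by simp)
      · have hn : n' = n := by
          rw [Option.some_inj] at hns
          exact hns.symm
        subst hn
        exact ⟨γ, Q, hQ, rfl⟩
  · -- refinement
    intro V hV
    obtain ⟨⟨t, k, os⟩, hVj⟩ := mem_iUnion.mp hV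
    rcases hVj with ⟨γ, -, rfl⟩ | ⟨γ, n, Q, -, hQ, rfl⟩
    · exact ⟨γ, PP_subB t k γ⟩
    · have hQ𝒱 : Q ∈ 𝒱A t k γ := by
        rw [heqA t k γ]
        exact mem_iUnion.mpr ⟨n, hQ⟩
      obtain ⟨i, hi⟩ := hrefA t k γ Q hQ𝒱
      exact ⟨i, inter_subset_left.trans hi⟩
  · -- covering
    intro x hxC
    obtain ⟨t, k, b, γ, hx⟩ := capture x hxC
    cases b with
    | true =>
      exact ⟨PP t k true γ, mem_iUnion.mpr ⟨(t, k, none), Or.inl ⟨γ, rfl, rfl⟩⟩, hx⟩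
    | false =>
      obtain ⟨Q, hQ, hxQ⟩ := hcovA t k γ hx
      rw [heqA t k γ] at hQ
      obtain ⟨n, hQn⟩ := mem_iUnion.mp hQ
      exact ⟨Q ∩ PP t k false γ,
        mem_iUnion.mpr ⟨(t, k, some n), Or.inr ⟨γ, n, Q, rfl, hQn, rfl⟩⟩, hxQ, hx⟩

end AlphaSubparaAux

/-- `X` is α-subparacompact iff every α-open cover has a
σ-closure-preserving closed refinement covering `X`. -/
theorem alphaSubparacompact_iff_sigmaClosurePreserving (T : TopologicalSpace X) :
    AlphaSubparacompact T ↔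
      ∀ 𝒰 : Set (Set X), (∀ U ∈ 𝒰, AlphaOpen T U) → ⋃₀ 𝒰 = univ →
        ∃ 𝒱 : Set (Set X), (∀ V ∈ 𝒱, @IsClosed X T V) ∧ SigmaClosurePreserving T 𝒱 ∧
          Refines 𝒱 𝒰 ∧ ⋃₀ 𝒱 = univ := by
  constructor
  · intro h 𝒰 hα hcov
    letI := T
    obtain ⟨𝒱, hcl, ⟨𝒲, heq, hdisc⟩, href, hcovV⟩ := h 𝒰 hα hcov
    exact ⟨𝒱, hcl, ⟨𝒲, heq,
      fun n => AlphaSubparaAux.DiscreteFam.closurePreserving' (hdisc n)⟩, href, hcovV⟩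
  · intro Hσ 𝒰 hα hcov
    letI := T
    haveI : IsWellOrder ↥𝒰 WellOrderingRel := WellOrderingRel.isWellOrder
    have hsub : (univ : Set X) ⊆ ⋃ i : ↥𝒰, (i : Set X) := by
      have he : (⋃ i : ↥𝒰, (i : Set X)) = univ := by
        rw [← sUnion_eq_iUnion]
        exact hcov
      rw [he]
    obtain ⟨𝒱, hcl, hsd, href, hcovC⟩ :=
      AlphaSubparaAux.mainLemma Hσ (Ordinal.type (WellOrderingRel (α := ↥𝒰)))
        ↥𝒰 WellOrderingRel inferInstance rfl (fun i => (i : Set X))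
        (fun i => hα i.1 i.2) univ isClosed_univ hsub
    refine ⟨𝒱, hcl, hsd, ?_, ?_⟩
    · intro V hV
      obtain ⟨i, hi⟩ := href V hV
      exact ⟨i.1, i.2, hi⟩
    · exact eq_univ_of_univ_subset (hcovC.trans (fun y hy => hy))
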